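/- Let (Ω, 𝓕, P) be a standard Borel probability space, let B = (B₀, B₁) : Ω → ℝ², W : Ω → ℝ and X : Ω → ℝ^d be measurable, and suppose B and W are conditionally independent given the σ-algebra σ(X). Set Y = B₀ + B₁·W and let κ denote the conditional distribution (regular conditional probability) of B given X, i.e. κ is a Markov kernel from ℝ^d to ℝ² with P((B ∈ A) | σ(X))(ω) = κ(X(ω))(A) a.s. for each Borel set A. Then for every t ∈ ℝ, P-almost surely, E[exp(i t Y) | σ(X) ⊔ σ(W)](ω) = φ_{κ(X(ω))}(t, t·W(ω)), where φ_μ denotes the characteristic function of the probability measure μ on ℝ². -/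

import Mathlib

open MeasureTheory ProbabilityTheory Set

/-- Conditional characteristic function identity for the random coefficient model
`Y = B₀ + B₁ · W` under conditional independence of `B` and `W` given `σ(X)`:
`E[exp(i t Y) | σ(X) ⊔ σ(W)](ω) = φ_{κ(X(ω))}(t, t · W(ω))` a.s., where `κ` is the
conditional distribution of `B` given `X`. -/
theorem stmt_1
    {Ω : Type*} [MeasurableSpace Ω] [StandardBorelSpace Ω] [Nonempty Ω]
    {P : Measure Ω} [IsProbabilityMeasure P] {d : ℕ}
    {B : Ω → ℝ × ℝ} {W : Ω → ℝ} {X : Ω → (Fin d → ℝ)}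
    (hB : Measurable B) (hW : Measurable W) (hX : Measurable X)
    (hCI : CondIndepFun (MeasurableSpace.comap X inferInstance) hX.comap_le B W P)
    (Y : Ω → ℝ) (hY : ∀ ω, Y ω = (B ω).1 + (B ω).2 * W ω)
    (κ : Kernel (Fin d → ℝ) (ℝ × ℝ)) [IsMarkovKernel κ]
    (hκ : ∀ A : Set (ℝ × ℝ), MeasurableSet A →
      (P[(B ⁻¹' A).indicator (fun _ => (1 : ℝ)) | MeasurableSpace.comap X inferInstance])
        =ᵐ[P] fun ω => (κ (X ω) A).toReal)
    (t : ℝ) :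
    P[(fun ω => Complex.exp (Complex.I * ((t * Y ω : ℝ) : ℂ))) |
        MeasurableSpace.comap X inferInstance ⊔ MeasurableSpace.comap W inferInstance]
      =ᵐ[P]
    fun ω => ∫ b : ℝ × ℝ,
        Complex.exp (Complex.I * ((t * b.1 + (t * W ω) * b.2 : ℝ) : ℂ)) ∂(κ (X ω)) := by
  classical
    set V : Ω → (Fin d → ℝ) × ℝ := fun ω => (X ω, W ω) with hVdef
  have hV : Measurable V := hX.prodMk hW
  have hcomap : MeasurableSpace.comap V inferInstance
      = (MeasurableSpace.comap X inferInstance) ⊔ MeasurableSpace.comap W inferInstance := by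
    have h1 : (inferInstance : MeasurableSpace ((Fin d → ℝ) × ℝ))
        = MeasurableSpace.comap Prod.fst inferInstance
          ⊔ MeasurableSpace.comap Prod.snd inferInstance := rfl
    rw [h1, MeasurableSpace.comap_sup, MeasurableSpace.comap_comp,
      MeasurableSpace.comap_comp]
    rfl
  set κ' : Kernel ((Fin d → ℝ) × ℝ) (ℝ × ℝ) := κ.comap Prod.fst measurable_fst with hκ'def
  -- Key identity on rectangles, via conditional independence
  have key : ∀ S : Set (Fin d → ℝ), ∀ T : Set ℝ, ∀ A : Set (ℝ × ℝ),
      MeasurableSet S → MeasurableSet T → MeasurableSet A →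
      P (X ⁻¹' S ∩ W ⁻¹' T ∩ B ⁻¹' A)
        = ∫⁻ ω in X ⁻¹' S ∩ W ⁻¹' T, κ (X ω) A ∂P := by
    intro S T A hS hT hA
    have hSX : MeasurableSet[(MeasurableSpace.comap X inferInstance)] (X ⁻¹' S) := ⟨S, hS, rfl⟩
    have hST : MeasurableSet (X ⁻¹' S ∩ W ⁻¹' T) := (hX hS).inter (hW hT)
    have hXmX : Measurable[(MeasurableSpace.comap X inferInstance)] X := Measurable.of_comap_le le_rfl
    have hmeasκ : Measurable[(MeasurableSpace.comap X inferInstance)] fun ω => (κ (X ω) A).toReal :=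
      ((Kernel.measurable_coe κ hA).comp hXmX).ennreal_toReal
    have hmeasκ0 : Measurable fun ω => (κ (X ω) A).toReal :=
      ((Kernel.measurable_coe κ hA).comp hX).ennreal_toReal
    have hboundκ : ∀ ω, ‖(κ (X ω) A).toReal‖ ≤ 1 := by
      intro ω
      rw [Real.norm_eq_abs, abs_of_nonneg ENNReal.toReal_nonneg]
      exact ENNReal.toReal_le_of_le_ofReal one_pos.le (by simpa using prob_le_one)
    set g : Ω → ℝ := (W ⁻¹' T).indicator fun _ => (1 : ℝ) with hgdef
    have hintg : Integrable g P := (integrable_const _).indicator (hW hT)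
    have hintBW : Integrable ((B ⁻¹' A ∩ W ⁻¹' T).indicator fun _ => (1 : ℝ)) P :=
      (integrable_const _).indicator ((hB hA).inter (hW hT))
    have hintprod : Integrable (fun ω => (κ (X ω) A).toReal * g ω) P := by
      refine Integrable.bdd_mul (c := 1) hintg hmeasκ0.aestronglyMeasurable (Filter.Eventually.of_forall fun ω => hboundκ ω)
    have hCI' := (condIndepFun_iff_condExp_inter_preimage_eq_mul hB hW).mp hCI A T hA hT
    have hκA := hκ A hA
    -- the chain of real-valued integral identities
    have hchain : (P (X ⁻¹' S ∩ W ⁻¹' T ∩ B ⁻¹' A)).toReal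
        = ∫ ω in X ⁻¹' S ∩ W ⁻¹' T, (κ (X ω) A).toReal ∂P := by
      have e1 : (P (X ⁻¹' S ∩ W ⁻¹' T ∩ B ⁻¹' A)).toReal
          = ∫ ω in X ⁻¹' S, ((B ⁻¹' A ∩ W ⁻¹' T).indicator fun _ => (1 : ℝ)) ω ∂P := by
        have hset : X ⁻¹' S ∩ (B ⁻¹' A ∩ W ⁻¹' T) = X ⁻¹' S ∩ W ⁻¹' T ∩ B ⁻¹' A := by
          ext ω; simp only [mem_inter_iff]; tauto
        rw [setIntegral_indicator ((hB hA).inter (hW hT)), setIntegral_const, smul_eq_mul,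
          mul_one, hset, measureReal_def]
      have e2 : ∫ ω in X ⁻¹' S, ((B ⁻¹' A ∩ W ⁻¹' T).indicator fun _ => (1 : ℝ)) ω ∂P
          = ∫ ω in X ⁻¹' S, (P⟦B ⁻¹' A ∩ W ⁻¹' T | (MeasurableSpace.comap X inferInstance)⟧) ω ∂P :=
        (setIntegral_condExp hX.comap_le hintBW hSX).symm
      have e3 : ∫ ω in X ⁻¹' S, (P⟦B ⁻¹' A ∩ W ⁻¹' T | (MeasurableSpace.comap X inferInstance)⟧) ω ∂P
          = ∫ ω in X ⁻¹' S, ((fun ω => (κ (X ω) A).toReal) * (P[g | (MeasurableSpace.comap X inferInstance)])) ω ∂P := by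
        refine integral_congr_ae (ae_restrict_of_ae ?_)
        filter_upwards [hCI', hκA] with ω h1 h2
        simp only [Pi.mul_apply]
        rw [h1, h2]
      have e4 : ∫ ω in X ⁻¹' S, ((fun ω => (κ (X ω) A).toReal) * (P[g | (MeasurableSpace.comap X inferInstance)])) ω ∂P
          = ∫ ω in X ⁻¹' S, (P[(fun ω => (κ (X ω) A).toReal) * g | (MeasurableSpace.comap X inferInstance)]) ω ∂P := by
        refine integral_congr_ae (ae_restrict_of_ae ?_)
        exact (condExp_mul_of_stronglyMeasurable_left hmeasκ.stronglyMeasurable hintprod hintg).symm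
      have e5 : ∫ ω in X ⁻¹' S, (P[(fun ω => (κ (X ω) A).toReal) * g | (MeasurableSpace.comap X inferInstance)]) ω ∂P
          = ∫ ω in X ⁻¹' S, (κ (X ω) A).toReal * g ω ∂P :=
        setIntegral_condExp hX.comap_le hintprod hSX
      have e6 : ∫ ω in X ⁻¹' S, (κ (X ω) A).toReal * g ω ∂P
          = ∫ ω in X ⁻¹' S ∩ W ⁻¹' T, (κ (X ω) A).toReal ∂P := by
        rw [← setIntegral_indicator (hW hT)]
        refine integral_congr_ae (ae_restrict_of_ae (Filter.Eventually.of_forall fun ω => ?_))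
        by_cases hω : ω ∈ W ⁻¹' T <;> simp [hgdef, hω]
      rw [e1, e2, e3, e4, e5, e6]
    -- convert to an `ENNReal` identity
    have hfin1 : P (X ⁻¹' S ∩ W ⁻¹' T ∩ B ⁻¹' A) ≠ ⊤ := (measure_lt_top _ _).ne
    have hfin2 : ∫⁻ ω in X ⁻¹' S ∩ W ⁻¹' T, κ (X ω) A ∂P ≠ ⊤ := by
      have hle : ∫⁻ ω in X ⁻¹' S ∩ W ⁻¹' T, κ (X ω) A ∂P ≤ P (X ⁻¹' S ∩ W ⁻¹' T) := by
        calc ∫⁻ ω in X ⁻¹' S ∩ W ⁻¹' T, κ (X ω) A ∂P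
            ≤ ∫⁻ _ in X ⁻¹' S ∩ W ⁻¹' T, 1 ∂P := lintegral_mono fun ω => prob_le_one
          _ = P (X ⁻¹' S ∩ W ⁻¹' T) := by rw [setLIntegral_one]
      exact (lt_of_le_of_lt hle (measure_lt_top _ _)).ne
    have hint_toReal : ∫ ω in X ⁻¹' S ∩ W ⁻¹' T, (κ (X ω) A).toReal ∂P
        = (∫⁻ ω in X ⁻¹' S ∩ W ⁻¹' T, κ (X ω) A ∂P).toReal := by
      refine integral_toReal ((Kernel.measurable_coe κ hA).comp hX).aemeasurable ?_
      exact Filter.Eventually.of_forall fun ω => measure_lt_top _ _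
    have := hchain.trans hint_toReal
    exact (ENNReal.toReal_eq_toReal_iff' hfin1 hfin2).mp this
  -- the joint law of ((X, W), B) disintegrates as (law of (X, W)) ⊗ κ'
  have hcomp : P.map (fun ω => (V ω, B ω)) = (P.map V).compProd κ' := by
    haveI : IsProbabilityMeasure (P.map (fun ω => (V ω, B ω))) :=
      Measure.isProbabilityMeasure_map (hV.prodMk hB).aemeasurable
    haveI : IsProbabilityMeasure (P.map V) := Measure.isProbabilityMeasure_map hV.aemeasurable
    refine ext_of_generate_finite
      (image2 (· ×ˢ ·)
        (image2 (· ×ˢ ·) { s : Set (Fin d → ℝ) | MeasurableSet s } { t : Set ℝ | MeasurableSet t })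
        { u : Set (ℝ × ℝ) | MeasurableSet u })
      ?_ ?_ ?_ ?_
    · exact (generateFrom_eq_prod generateFrom_prod MeasurableSpace.generateFrom_measurableSet
        (isCountablySpanning_measurableSet.prod isCountablySpanning_measurableSet)
        isCountablySpanning_measurableSet).symm
    · exact (MeasurableSpace.isPiSystem_measurableSet.prod MeasurableSpace.isPiSystem_measurableSet).prod
        MeasurableSpace.isPiSystem_measurableSet
    · rintro _ ⟨st, ⟨S, hS, T, hT, rfl⟩, A, hA, rfl⟩
      simp only [mem_setOf_eq] at hS hT hA
      have hpre : (fun ω => (V ω, B ω)) ⁻¹' ((S ×ˢ T) ×ˢ A)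
          = X ⁻¹' S ∩ W ⁻¹' T ∩ B ⁻¹' A := by
        ext ω
        simp only [mem_preimage, mem_prod, mem_inter_iff, hVdef]
      rw [Measure.map_apply (hV.prodMk hB) ((hS.prod hT).prod hA), hpre,
        Measure.compProd_apply_prod (hS.prod hT) hA,
        setLIntegral_map (hS.prod hT) (Kernel.measurable_coe κ' hA) hV]
      have hpre2 : V ⁻¹' (S ×ˢ T) = X ⁻¹' S ∩ W ⁻¹' T := by
        ext ω
        simp only [mem_preimage, mem_prod, mem_inter_iff, hVdef]
      rw [hpre2, key S T A hS hT hA]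
      refine setLIntegral_congr_fun ((hX hS).inter (hW hT))
        (fun ω _ => ?_)
      rw [hκ'def, Kernel.comap_apply]
    · simp [measure_univ]
  -- identify `κ'` with the conditional distribution of `B` given `V`
  have hae : ∀ᵐ ω ∂P, κ' (V ω) = condDistrib B V P (V ω) :=
    ae_of_ae_map hV.aemeasurable
      (condDistrib_ae_eq_of_measure_eq_compProd V hB.aemeasurable hcomp).symm
  -- the integrand as a function of `(V, B)`
  set f : ((Fin d → ℝ) × ℝ) × (ℝ × ℝ) → ℂ :=
    fun p => Complex.exp (Complex.I * ((t * p.2.1 + (t * p.1.2) * p.2.2 : ℝ) : ℂ)) with hfdef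
  have hf_cont : Continuous f := by
    apply Complex.continuous_exp.comp
    fun_prop
  have hnorm : ∀ p, ‖f p‖ = 1 := by
    intro p
    rw [hfdef]
    simp only []
    rw [mul_comm]
    exact Complex.norm_exp_ofReal_mul_I _
  have hf_int : Integrable (fun ω => f (V ω, B ω)) P := by
    refine ⟨(hf_cont.stronglyMeasurable.comp_measurable (hV.prodMk hB)).aestronglyMeasurable, ?_⟩
    refine (hasFiniteIntegral_const (1 : ℝ)).mono' ?_
    exact Filter.Eventually.of_forall fun ω => (hnorm _).le.trans (by norm_num)
  have hfun : (fun ω => Complex.exp (Complex.I * ((t * Y ω : ℝ) : ℂ)))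
      = fun ω => f (V ω, B ω) := by
    funext ω
    have h : t * Y ω = t * (B ω).1 + t * W ω * (B ω).2 := by rw [hY ω]; ring
    rw [hfdef]
    simp only []
    rw [h]
  rw [← hcomap, hfun]
  refine (condExp_prod_ae_eq_integral_condDistrib hV hB.aemeasurable
    hf_cont.stronglyMeasurable hf_int).trans ?_
  filter_upwards [hae] with ω hω
  rw [← hω, hκ'def, Kernel.comap_apply]
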